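/- Let ε be a solution of the contraction system for the Pauli grading of sl(3,ℂ) and let A ∈ H₃. Then the function ε^A defined by ε^A(u,v) = ε(uA, vA) (row-vector multiplication by A on the right) is also a solution of the contraction system for the Pauli grading of sl(3,ℂ). -/

import Mathlib

open Matrix

/-- ω = exp(2πi/3). -/
noncomputable def om3 : ℂ := Complex.exp (2 * Real.pi * Complex.I / 3)

/-- The diagonal matrix Q = diag(1, ω, ω²). -/
noncomputable def Qm3 : Matrix (Fin 3) (Fin 3) ℂ :=
  Matrix.diagonal fun j => om3 ^ (j : ℕ)

/-- The matrix P with P_{j,k} = 1 if k ≡ j + 1 (mod 3) and 0 otherwise. -/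
noncomputable def Pm3 : Matrix (Fin 3) (Fin 3) ℂ :=
  Matrix.of fun j k => if ((k : ℕ) : ZMod 3) = ((j : ℕ) : ZMod 3) + 1 then 1 else 0

/-- X_{(r,s)} = Q^r P^s for (r,s) ∈ ℤ_3 × ℤ_3. -/
noncomputable def Xm3 (u : ZMod 3 × ZMod 3) : Matrix (Fin 3) (Fin 3) ℂ :=
  Qm3 ^ u.1.val * Pm3 ^ u.2.val

/-- A symmetric function ε is a solution of the contraction system for the Pauli grading
    of sl(3,ℂ): for all i, j, k ∈ (ℤ_3 × ℤ_3) \ {(0,0)} the (rewritten) Jacobi identity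
    for the deformed bracket [X_u, X_v]_ε = ε(u,v)·⁅X_u, X_v⁆ holds. -/
def IsPauliSol3 (ε : (ZMod 3 × ZMod 3) × (ZMod 3 × ZMod 3) → ℂ) : Prop :=
  (∀ u v, ε (u, v) = ε (v, u)) ∧
    ∀ i j k : ZMod 3 × ZMod 3, i ≠ (0, 0) → j ≠ (0, 0) → k ≠ (0, 0) →
      (ε (i, j + k) * ε (j, k)) • ⁅Xm3 i, ⁅Xm3 j, Xm3 k⁆⁆ +
        (ε (k, i + j) * ε (i, j)) • ⁅Xm3 k, ⁅Xm3 i, Xm3 j⁆⁆ +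
        (ε (j, k + i) * ε (k, i)) • ⁅Xm3 j, ⁅Xm3 k, Xm3 i⁆⁆ = 0

/-- The right action of a 2×2 matrix A over ℤ₃ on a row vector v ∈ ℤ₃ × ℤ₃, v ↦ vA. -/
def actv (A : Matrix (Fin 2) (Fin 2) (ZMod 3)) (v : ZMod 3 × ZMod 3) : ZMod 3 × ZMod 3 :=
  (v.1 * A 0 0 + v.2 * A 1 0, v.1 * A 0 1 + v.2 * A 1 1)

lemma om3_pow_three : om3 ^ 3 = 1 := by
  rw [om3, ← Complex.exp_nat_mul]
  rw [show ((3:ℕ) : ℂ) * (2 * Real.pi * Complex.I / 3) = 2 * Real.pi * Complex.I by push_cast; ring]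
  exact Complex.exp_two_pi_mul_I

lemma om3_ne_zero : om3 ≠ 0 := Complex.exp_ne_zero _

lemma om3_pow_mod (n : ℕ) : om3 ^ (n % 3) = om3 ^ n := by
  conv_rhs => rw [← Nat.div_add_mod n 3]
  rw [pow_add, pow_mul, om3_pow_three, one_pow, one_mul]

noncomputable def nu (a : ZMod 3) : ℂ := om3 ^ a.val

lemma nu_add (a b : ZMod 3) : nu (a + b) = nu a * nu b := by
  rw [nu, nu, nu, ZMod.val_add, om3_pow_mod, pow_add]

lemma nu_ne (a : ZMod 3) : nu a ≠ 0 := pow_ne_zero _ om3_ne_zero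

lemma nu_zero : nu 0 = 1 := by simp [nu]

lemma nu_mul_val (a b : ZMod 3) : nu (a * b) = om3 ^ (a.val * b.val) := by
  rw [nu, ZMod.val_mul, om3_pow_mod]

lemma Q3 : Qm3 ^ 3 = 1 := by
  have h : ∀ j : Fin 3, (om3 ^ (j : ℕ)) ^ 3 = 1 := fun j => by
    rw [← pow_mul, mul_comm, pow_mul, om3_pow_three, one_pow]
  rw [Qm3, Matrix.diagonal_pow]
  ext j k
  simp [Matrix.diagonal_apply, Matrix.one_apply, h j]

lemma P3 : Pm3 ^ 3 = 1 := by
  rw [pow_succ, pow_succ, pow_one]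
  ext j k
  fin_cases j <;> fin_cases k <;>
    simp +decide [Pm3, Matrix.mul_apply, Fin.sum_univ_three, Matrix.one_apply]

lemma hPQ : Pm3 * Qm3 = om3 • (Qm3 * Pm3) := by
  ext j k
  fin_cases j <;> fin_cases k <;>
    simp +decide [Pm3, Qm3, Matrix.mul_apply, Matrix.smul_apply, Fin.sum_univ_three,
      Matrix.diagonal] <;>
    first
      | rfl
      | linear_combination om3_pow_three
      | linear_combination -om3_pow_three
      | ring

lemma pow_mod_three {M : Matrix (Fin 3) (Fin 3) ℂ} (h : M ^ 3 = 1) (n : ℕ) :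
    M ^ (n % 3) = M ^ n := by
  conv_rhs => rw [← Nat.div_add_mod n 3]
  rw [pow_add, pow_mul, h, one_pow, one_mul]

lemma commPQ (p : ℕ) : Pm3 * Qm3 ^ p = om3 ^ p • (Qm3 ^ p * Pm3) := by
  induction p with
  | zero => simp
  | succ n ih =>
    rw [pow_succ, ← mul_assoc, ih, smul_mul_assoc, mul_assoc, hPQ, mul_smul_comm,
      smul_smul]
    rw [← pow_succ, ← mul_assoc]

lemma commX (s p : ℕ) : Pm3 ^ s * Qm3 ^ p = om3 ^ (s * p) • (Qm3 ^ p * Pm3 ^ s) := by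
  induction s with
  | zero => simp
  | succ n ih =>
    rw [pow_succ, mul_assoc, commPQ, mul_smul_comm, ← mul_assoc, ih, smul_mul_assoc,
      smul_smul, ← pow_add]
    rw [show p + n * p = (n + 1) * p by ring, ← mul_assoc]

lemma mulX (u v : ZMod 3 × ZMod 3) :
    Xm3 u * Xm3 v = nu (u.2 * v.1) • Xm3 (u + v) := by
  show Qm3 ^ u.1.val * Pm3 ^ u.2.val * (Qm3 ^ v.1.val * Pm3 ^ v.2.val) = _
  rw [mul_assoc, ← mul_assoc (Pm3 ^ u.2.val), commX, smul_mul_assoc, mul_smul_comm,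
    mul_assoc, ← mul_assoc (Qm3 ^ u.1.val), ← pow_add, ← pow_add, nu_mul_val]
  have h1 : Qm3 ^ (u.1.val + v.1.val) = Qm3 ^ ((u + v).1.val) := by
    rw [Prod.fst_add, ZMod.val_add, pow_mod_three Q3]
  have h2 : Pm3 ^ (u.2.val + v.2.val) = Pm3 ^ ((u + v).2.val) := by
    rw [Prod.snd_add, ZMod.val_add, pow_mod_three P3]
  rw [h1, h2]
  rfl

noncomputable def cc (u v : ZMod 3 × ZMod 3) : ℂ := nu (u.2 * v.1) - nu (v.2 * u.1)

lemma lieX (u v : ZMod 3 × ZMod 3) : ⁅Xm3 u, Xm3 v⁆ = cc u v • Xm3 (u + v) := by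
  rw [Ring.lie_def, mulX, mulX, add_comm v u, cc, sub_smul]

lemma lie2 (i j k : ZMod 3 × ZMod 3) :
    ⁅Xm3 i, ⁅Xm3 j, Xm3 k⁆⁆ = (cc j k * cc i (j + k)) • Xm3 (i + (j + k)) := by
  rw [lieX j k, show ⁅Xm3 i, cc j k • Xm3 (j + k)⁆ = cc j k • ⁅Xm3 i, Xm3 (j + k)⁆ by
    rw [Ring.lie_def, Ring.lie_def, mul_smul_comm, smul_mul_assoc, smul_sub], lieX i (j + k), smul_smul, mul_comm]

lemma X_ne (u : ZMod 3 × ZMod 3) : Xm3 u ≠ 0 := by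
  have hQ : IsUnit Qm3 :=
    ⟨⟨Qm3, Qm3 ^ 2, by rw [← pow_succ' Qm3 2, Q3], by rw [← pow_succ Qm3 2, Q3]⟩, rfl⟩
  have hP : IsUnit Pm3 :=
    ⟨⟨Pm3, Pm3 ^ 2, by rw [← pow_succ' Pm3 2, P3], by rw [← pow_succ Pm3 2, P3]⟩, rfl⟩
  exact ((hQ.pow _).mul (hP.pow _)).ne_zero

def sg (u v : ZMod 3 × ZMod 3) : ZMod 3 := u.2 * v.1 - v.2 * u.1

lemma cc_eq (u v : ZMod 3 × ZMod 3) :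
    cc u v = nu (v.2 * u.1) * (nu (sg u v) - 1) := by
  rw [cc, mul_sub, mul_one, ← nu_add]
  congr 2
  simp only [sg]; ring

lemma sigmaA (A : Matrix (Fin 2) (Fin 2) (ZMod 3)) (u v : ZMod 3 × ZMod 3) :
    sg (actv A u) (actv A v) = A.det * sg u v := by
  simp only [sg, actv, Matrix.det_fin_two]; ring

lemma actv_add (A : Matrix (Fin 2) (Fin 2) (ZMod 3)) (u v : ZMod 3 × ZMod 3) :
    actv A (u + v) = actv A u + actv A v := by
  simp only [actv, Prod.fst_add, Prod.snd_add, Prod.mk_add_mk, Prod.mk.injEq]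
  constructor <;> ring

lemma actv_ne' : ∀ (a b c d : ZMod 3) (u : ZMod 3 × ZMod 3), a * d - b * c ≠ 0 →
    u ≠ (0, 0) → (u.1 * a + u.2 * c, u.1 * b + u.2 * d) ≠ ((0 : ZMod 3), (0 : ZMod 3)) := by
  decide

lemma actv_ne {A : Matrix (Fin 2) (Fin 2) (ZMod 3)} (hd : A.det ≠ 0)
    {u : ZMod 3 × ZMod 3} (hu : u ≠ (0, 0)) : actv A u ≠ (0, 0) := by
  refine actv_ne' (A 0 0) (A 0 1) (A 1 0) (A 1 1) u ?_ hu
  rwa [← Matrix.det_fin_two]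

def gA (A : Matrix (Fin 2) (Fin 2) (ZMod 3)) (t : ZMod 3) (u v : ZMod 3 × ZMod 3) : ZMod 3 :=
  (actv A v).2 * (actv A u).1 - v.2 * u.1 - t * sg u v

lemma ccA_one {A : Matrix (Fin 2) (Fin 2) (ZMod 3)} (h1 : A.det = 1) (u v : ZMod 3 × ZMod 3) :
    cc (actv A u) (actv A v) = (1 : ℂ) * (nu (gA A 0 u v) * cc u v) := by
  rw [one_mul, cc_eq (actv A u), sigmaA, h1, one_mul, cc_eq u v, ← mul_assoc, ← nu_add]
  congr 2
  simp only [gA, sg]; ring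

lemma ccA_neg {A : Matrix (Fin 2) (Fin 2) (ZMod 3)} (h1 : A.det = -1) (u v : ZMod 3 × ZMod 3) :
    cc (actv A u) (actv A v) = (-1 : ℂ) * (nu (gA A 1 u v) * cc u v) := by
  rw [cc_eq (actv A u), sigmaA, h1, cc_eq u v]
  have hinv : nu (-sg u v) * nu (sg u v) = 1 := by
    rw [← nu_add, neg_add_cancel, nu_zero]
  have key : nu (-1 * sg u v) - 1 = -(nu (-sg u v) * (nu (sg u v) - 1)) := by
    rw [neg_one_mul]
    linear_combination hinv
  rw [key]
  have e : nu (gA A 1 u v) * nu (v.2 * u.1) = nu ((actv A v).2 * (actv A u).1) * nu (-sg u v) := by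
    rw [← nu_add, ← nu_add]
    congr 1
    simp only [gA, sg]; ring
  linear_combination (nu (sg u v) - 1) * e

lemma g_cyc {A : Matrix (Fin 2) (Fin 2) (ZMod 3)} {t : ZMod 3}
    (h : (1 : ZMod 3) - A.det - 2 * t = 0) (i j k : ZMod 3 × ZMod 3) :
    gA A t j k + gA A t i (j + k) = gA A t i j + gA A t k (i + j) := by
  have h2 : gA A t j k + gA A t i (j + k) - (gA A t i j + gA A t k (i + j))
      = (1 - A.det - 2 * t) * (sg j k + sg i k) := by
    simp only [gA, sg, actv, Matrix.det_fin_two, Prod.fst_add, Prod.snd_add]; ring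
  rw [h, zero_mul] at h2
  exact sub_eq_zero.mp h2

noncomputable def TT (ε : (ZMod 3 × ZMod 3) × (ZMod 3 × ZMod 3) → ℂ)
    (i j k : ZMod 3 × ZMod 3) : ℂ :=
  ε (i, j + k) * ε (j, k) * (cc j k * cc i (j + k)) +
    ε (k, i + j) * ε (i, j) * (cc i j * cc k (i + j)) +
    ε (j, k + i) * ε (k, i) * (cc k i * cc j (k + i))

lemma sol_scalar {ε : (ZMod 3 × ZMod 3) × (ZMod 3 × ZMod 3) → ℂ} (hε : IsPauliSol3 ε)
    (i j k : ZMod 3 × ZMod 3) (hi : i ≠ (0, 0)) (hj : j ≠ (0, 0)) (hk : k ≠ (0, 0)) :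
    TT ε i j k = 0 := by
  have h2 := hε.2 i j k hi hj hk
  have e1 : k + (i + j) = i + (j + k) := by ring
  have e2 : j + (k + i) = i + (j + k) := by ring
  rw [lie2, lie2, lie2, e1, e2, smul_smul, smul_smul, smul_smul,
    ← add_smul, ← add_smul] at h2
  rcases smul_eq_zero.mp h2 with h | h
  · exact h
  · exact absurd h (X_ne _)

lemma scalar_sol (ε : (ZMod 3 × ZMod 3) × (ZMod 3 × ZMod 3) → ℂ)
    (hT : ∀ i j k : ZMod 3 × ZMod 3, i ≠ (0, 0) → j ≠ (0, 0) → k ≠ (0, 0) →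
      TT ε i j k = 0)
    (i j k : ZMod 3 × ZMod 3) (hi : i ≠ (0, 0)) (hj : j ≠ (0, 0)) (hk : k ≠ (0, 0)) :
    (ε (i, j + k) * ε (j, k)) • ⁅Xm3 i, ⁅Xm3 j, Xm3 k⁆⁆ +
        (ε (k, i + j) * ε (i, j)) • ⁅Xm3 k, ⁅Xm3 i, Xm3 j⁆⁆ +
        (ε (j, k + i) * ε (k, i)) • ⁅Xm3 j, ⁅Xm3 k, Xm3 i⁆⁆ = 0 := by
  have e1 : k + (i + j) = i + (j + k) := by ring
  have e2 : j + (k + i) = i + (j + k) := by ring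
  have h := hT i j k hi hj hk
  rw [TT] at h
  rw [lie2, lie2, lie2, e1, e2, smul_smul, smul_smul, smul_smul,
    ← add_smul, ← add_smul, h, zero_smul]

lemma TT_act (A : Matrix (Fin 2) (Fin 2) (ZMod 3)) (hdet : A.det ≠ 0) (t : ZMod 3) (s : ℂ)
    (hs : s * s = 1)
    (hcc : ∀ u v, cc (actv A u) (actv A v) = s * (nu (gA A t u v) * cc u v))
    (hcyc : ∀ i j k : ZMod 3 × ZMod 3,
      gA A t j k + gA A t i (j + k) = gA A t i j + gA A t k (i + j))
    (ε : (ZMod 3 × ZMod 3) × (ZMod 3 × ZMod 3) → ℂ)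
    (hT : ∀ i j k : ZMod 3 × ZMod 3, i ≠ (0, 0) → j ≠ (0, 0) → k ≠ (0, 0) →
      TT ε i j k = 0)
    (i j k : ZMod 3 × ZMod 3) (hi : i ≠ (0, 0)) (hj : j ≠ (0, 0)) (hk : k ≠ (0, 0)) :
    TT (fun p => ε (actv A p.1, actv A p.2)) i j k = 0 := by
  have h0 := hT (actv A i) (actv A j) (actv A k) (actv_ne hdet hi) (actv_ne hdet hj)
    (actv_ne hdet hk)
  rw [TT] at h0
  rw [← actv_add, ← actv_add, ← actv_add, hcc, hcc, hcc, hcc, hcc, hcc] at h0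
  set n1 := nu (gA A t j k) with hn1
  set n2 := nu (gA A t i (j + k)) with hn2
  set n3 := nu (gA A t i j) with hn3
  set n4 := nu (gA A t k (i + j)) with hn4
  set n5 := nu (gA A t k i) with hn5
  set n6 := nu (gA A t j (k + i)) with hn6
  have e1 : n3 * n4 = n1 * n2 := by
    rw [hn1, hn2, hn3, hn4, ← nu_add, ← nu_add, hcyc i j k]
  have e2 : n5 * n6 = n1 * n2 := by
    rw [hn1, hn2, hn5, hn6, ← nu_add, ← nu_add, hcyc j k i]
  have hne : n1 * n2 ≠ 0 := mul_ne_zero (nu_ne _) (nu_ne _)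
  set a1 := ε (actv A i, actv A (j + k)) * ε (actv A j, actv A k) with ha1
  set a2 := ε (actv A k, actv A (i + j)) * ε (actv A i, actv A j) with ha2
  set a3 := ε (actv A j, actv A (k + i)) * ε (actv A k, actv A i) with ha3
  set c1 := cc j k * cc i (j + k) with hc1
  set c2 := cc i j * cc k (i + j) with hc2
  set c3 := cc k i * cc j (k + i) with hc3
  have key : n1 * n2 * TT (fun p => ε (actv A p.1, actv A p.2)) i j k = 0 := by
    rw [TT]
    simp only
    rw [← ha1, ← ha2, ← ha3, ← hc1, ← hc2, ← hc3]
    linear_combination h0 - (a1 * n1 * n2 * c1 + a2 * n3 * n4 * c2 + a3 * n5 * n6 * c3) * hs -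
      a2 * c2 * e1 - a3 * c3 * e2
  rcases mul_eq_zero.mp key with h | h
  · exact absurd h hne
  · exact h

/-- If ε is a solution of the contraction system for the Pauli grading of sl(3,ℂ) and
    A ∈ H₃ (a 2×2 matrix over ℤ₃ with determinant ±1), then ε^A(u,v) = ε(uA, vA) is
    again a solution. -/
theorem stmt16 (ε : (ZMod 3 × ZMod 3) × (ZMod 3 × ZMod 3) → ℂ) (hε : IsPauliSol3 ε)
    (A : Matrix (Fin 2) (Fin 2) (ZMod 3)) (hA : A.det = 1 ∨ A.det = -1) :
    IsPauliSol3 (fun p => ε (actv A p.1, actv A p.2)) := by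

  refine ⟨fun u v => hε.1 _ _, ?_⟩
  have hT : ∀ i j k : ZMod 3 × ZMod 3, i ≠ (0, 0) → j ≠ (0, 0) → k ≠ (0, 0) →
      TT ε i j k = 0 := sol_scalar hε
  have key : ∀ i j k : ZMod 3 × ZMod 3, i ≠ (0, 0) → j ≠ (0, 0) → k ≠ (0, 0) →
      TT (fun p => ε (actv A p.1, actv A p.2)) i j k = 0 := by
    rcases hA with h1 | h1
    · exact TT_act A (by rw [h1]; decide) 0 1 (by norm_num) (ccA_one h1)
        (fun i j k => g_cyc (by rw [h1]; decide) i j k) ε hT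
    · exact TT_act A (by rw [h1]; decide) 1 (-1) (by norm_num) (ccA_neg h1)
        (fun i j k => g_cyc (by rw [h1]; decide) i j k) ε hT
  exact scalar_sol (fun p => ε (actv A p.1, actv A p.2)) key
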